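/- For α, β, γ > 0, the kernel G^{(α,β,γ)}_t(x,y) (defined piecewise as t^{-1/α} for |y-x| ≤ min(t^{1/α},1), t^{β/α}|y-x|^{-β-1} for min(t^{1/α},1) < |y-x| ≤ 1, and t^{β/α}|y-x|^{-γ-1} for |y-x| > 1) has the sub-convolution property: for every T > 0 there exists C such that ∫_ℝ G^{(α,β,γ)}_{t-s}(x,z) G^{(α,β,γ)}_s(z,y) dz ≤ C · G^{(α,β,γ)}_t(x,y) for all t ∈ (0,T], s ∈ (0,t), and x,y ∈ ℝ. -/

import Mathlib

open MeasureTheory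

/-- The three-regime kernel `G^{(α,β,γ)}_t(x,y)`. -/
noncomputable def G3 (α β γ t x y : ℝ) : ℝ :=
  if |y - x| ≤ min (t ^ (1 / α)) 1 then t ^ (-1 / α)
  else if |y - x| ≤ 1 then t ^ (β / α) * |y - x| ^ (-β - 1)
  else t ^ (β / α) * |y - x| ^ (-γ - 1)

open Set Real

/-- The radial profile of the kernel. -/
noncomputable def Gr (α β γ u ρ : ℝ) : ℝ :=
  if ρ ≤ min (u ^ (1 / α)) 1 then u ^ (-1 / α)
  else if ρ ≤ 1 then u ^ (β / α) * ρ ^ (-β - 1)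
  else u ^ (β / α) * ρ ^ (-γ - 1)

lemma G3_eq_Gr (α β γ t x y : ℝ) : G3 α β γ t x y = Gr α β γ t |y - x| := rfl

section aux

variable {α β γ T u t r ρ : ℝ}

lemma min_pos (hα : 0 < α) (hu : 0 < u) : 0 < min (u ^ (1 / α)) 1 :=
  lt_min (rpow_pos_of_pos hu _) one_pos

lemma Gr_pos (hα : 0 < α) (hu : 0 < u) : 0 < Gr α β γ u ρ := by
  unfold Gr
  split_ifs with h1 h2
  · exact rpow_pos_of_pos hu _
  · have hρ : 0 < ρ := (min_pos hα hu).trans (not_le.mp h1)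
    exact mul_pos (rpow_pos_of_pos hu _) (rpow_pos_of_pos hρ _)
  · have hρ : 0 < ρ := (min_pos hα hu).trans (not_le.mp h1)
    exact mul_pos (rpow_pos_of_pos hu _) (rpow_pos_of_pos hρ _)

/-- `u^(β/α) ≤ max 1 (T^(β/α))` for `0 < u ≤ T`. -/
lemma key3 (hα : 0 < α) (hβ : 0 < β) (hu : 0 < u) (huT : u ≤ T) :
    u ^ (β / α) ≤ max 1 (T ^ (β / α)) := by
  rcases le_total u 1 with h | h
  · exact le_max_of_le_left (rpow_le_one hu.le h (by positivity))
  · exact le_max_of_le_right (rpow_le_rpow hu.le huT (by positivity))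

/-- `u^(β/α) * m^(-β) ≤ max 1 (T^(β/α))` where `m = min (u^(1/α)) 1`. -/
lemma key2 (hα : 0 < α) (hβ : 0 < β) (hu : 0 < u) (huT : u ≤ T) :
    u ^ (β / α) * (min (u ^ (1 / α)) 1) ^ (-β) ≤ max 1 (T ^ (β / α)) := by
  rcases le_total u 1 with h | h
  · have hm : min (u ^ (1 / α)) 1 = u ^ (1 / α) :=
      min_eq_left (rpow_le_one hu.le h (by positivity))
    rw [hm, ← rpow_mul hu.le, ← rpow_add hu]
    have he : β / α + 1 / α * (-β) = 0 := by field_simp; ring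
    rw [he, rpow_zero]
    exact le_max_left _ _
  · have hm : min (u ^ (1 / α)) 1 = 1 :=
      min_eq_right (one_le_rpow h (by positivity))
    rw [hm, one_rpow, mul_one]
    exact key3 hα hβ hu huT

lemma half_rpow {r : ℝ} (hr : 0 ≤ r) (e : ℝ) : (r / 2) ^ e = r ^ e * 2 ^ (-e) := by
  rw [div_eq_mul_inv, mul_rpow hr (by norm_num), inv_rpow (by norm_num : (0:ℝ) ≤ 2),
    ← rpow_neg (by norm_num : (0:ℝ) ≤ 2)]

lemma two_rpow_le (a b : ℝ) (h : a ≤ b) : (2:ℝ) ^ a ≤ 2 ^ b :=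
  rpow_le_rpow_of_exponent_le one_le_two h

lemma one_le_two_rpow {a : ℝ} (h : 0 ≤ a) : (1:ℝ) ≤ 2 ^ a := by
  calc (1:ℝ) = 2 ^ (0:ℝ) := (rpow_zero 2).symm
  _ ≤ 2 ^ a := two_rpow_le _ _ h

/-- The global pointwise bound `Gr u ρ ≤ B_T u^{-1/α}`. -/
lemma key1 (hα : 0 < α) (hβ : 0 < β) (hγ : 0 < γ) (hu : 0 < u) (huT : u ≤ T) :
    Gr α β γ u ρ ≤ max 1 (T ^ ((β + 1) / α)) * u ^ (-1 / α) := by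
  have hB1 : (1:ℝ) ≤ max 1 (T ^ ((β + 1) / α)) := le_max_left _ _
  have hup : 0 < u ^ (-1 / α) := rpow_pos_of_pos hu _
  have hm : 0 < min (u ^ (1 / α)) 1 := min_pos hα hu
  have hub : u ^ (β / α) * (min (u ^ (1 / α)) 1) ^ (-β - 1) ≤
      max 1 (T ^ ((β + 1) / α)) * u ^ (-1 / α) := by
    rcases le_total u 1 with h | h
    · have hmin : min (u ^ (1 / α)) 1 = u ^ (1 / α) :=
        min_eq_left (rpow_le_one hu.le h (by positivity))
      rw [hmin, ← rpow_mul hu.le, ← rpow_add hu]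
      have he : β / α + 1 / α * (-β - 1) = -1 / α := by field_simp; ring
      rw [he]
      exact le_mul_of_one_le_left hup.le hB1
    · have hmin : min (u ^ (1 / α)) 1 = 1 :=
        min_eq_right (one_le_rpow h (by positivity))
      rw [hmin, one_rpow, mul_one]
      have he : β / α = (β + 1) / α + -1 / α := by ring
      rw [he, rpow_add hu]
      refine mul_le_mul_of_nonneg_right ?_ hup.le
      exact le_max_of_le_right (rpow_le_rpow hu.le huT (by positivity))
  unfold Gr
  split_ifs with h1 h2
  · exact le_mul_of_one_le_left hup.le hB1
  · refine le_trans ?_ hub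
    exact mul_le_mul_of_nonneg_left
      (rpow_le_rpow_of_nonpos hm (not_le.mp h1).le (by linarith))
      (rpow_nonneg hu.le _)
  · refine le_trans ?_ hub
    have h1' : (1:ℝ) < ρ := not_le.mp h2
    have hle1 : ρ ^ (-γ - 1) ≤ 1 :=
      rpow_le_one_of_one_le_of_nonpos h1'.le (by linarith)
    have hge1 : (1:ℝ) ≤ (min (u ^ (1 / α)) 1) ^ (-β - 1) :=
      one_le_rpow_of_pos_of_le_one_of_nonpos hm (min_le_right _ _) (by linarith)
    exact mul_le_mul_of_nonneg_left (hle1.trans hge1) (rpow_nonneg hu.le _)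

/-- Claim A : if `r ≤ 2 min(t^{1/α},1)` then `t^{-1/α} ≤ 2^{β+γ+2} Gr t r`. -/
lemma claimA (hα : 0 < α) (hβ : 0 < β) (hγ : 0 < γ) (ht : 0 < t)
    (hr : r ≤ 2 * min (t ^ (1 / α)) 1) :
    t ^ (-1 / α) ≤ 2 ^ (β + γ + 2) * Gr α β γ t r := by
  have hm : 0 < min (t ^ (1 / α)) 1 := min_pos hα ht
  have hm1 : min (t ^ (1 / α)) 1 ≤ 1 := min_le_right _ _
  have hmt : min (t ^ (1 / α)) 1 ≤ t ^ (1 / α) := min_le_left _ _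
  have htp : 0 < t ^ (-1 / α) := rpow_pos_of_pos ht _
  have hc1 : (1:ℝ) ≤ 2 ^ (β + γ + 2) := one_le_two_rpow (by linarith)
  unfold Gr
  split_ifs with h1 h2
  · exact le_mul_of_one_le_left htp.le hc1
  · -- min < r ≤ 1 : Gr = t^{β/α} r^{-β-1}
    have hr0 : 0 < r := hm.trans (not_le.mp h1)
    have hstep : (2 * t ^ (1 / α)) ^ (-β - 1) ≤ r ^ (-β - 1) := by
      refine rpow_le_rpow_of_nonpos hr0 ?_ (by linarith)
      calc r ≤ 2 * min (t ^ (1 / α)) 1 := hr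
      _ ≤ 2 * t ^ (1 / α) := by linarith
    have hval : t ^ (β / α) * (2 * t ^ (1 / α)) ^ (-β - 1)
        = 2 ^ (-β - 1) * t ^ (-1 / α) := by
      rw [mul_rpow (by norm_num : (0:ℝ) ≤ 2) (rpow_nonneg ht.le _), ← rpow_mul ht.le,
        ← mul_assoc, mul_comm (t ^ (β / α)) _, mul_assoc, ← rpow_add ht]
      congr 1
      field_simp
      ring
    have key : 2 ^ (-β - 1) * t ^ (-1 / α) ≤ t ^ (β / α) * r ^ (-β - 1) := by
      rw [← hval]
      exact mul_le_mul_of_nonneg_left hstep (rpow_nonneg ht.le _)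
    have h2p : (0:ℝ) < 2 ^ (β + 1) := rpow_pos_of_pos two_pos _
    have key2 := mul_le_mul_of_nonneg_left key h2p.le
    rw [← mul_assoc, ← rpow_add two_pos, show β + 1 + (-β - 1) = 0 by ring,
      rpow_zero, one_mul] at key2
    calc t ^ (-1 / α) ≤ 2 ^ (β + 1) * (t ^ (β / α) * r ^ (-β - 1)) := key2
    _ ≤ 2 ^ (β + γ + 2) * (t ^ (β / α) * r ^ (-β - 1)) := by
        refine mul_le_mul_of_nonneg_right (two_rpow_le _ _ (by linarith)) ?_
        positivity
  · -- 1 < r ≤ 2 min ≤ 2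
    have h1r : (1:ℝ) < r := not_le.mp h2
    have hr0 : (0:ℝ) < r := one_pos.trans h1r
    have h12 : (1/2 : ℝ) ≤ t ^ (1 / α) := by
      have : (1:ℝ)/2 ≤ min (t ^ (1 / α)) 1 := by linarith
      linarith
    have hr2 : r ≤ 2 := by linarith
    have hA : (2:ℝ) ^ (-(β+1)) ≤ t ^ (1 / α * (β + 1)) := by
      calc (2:ℝ) ^ (-(β+1)) = (1/2 : ℝ) ^ (β+1) := by
            rw [half_rpow (by norm_num : (0:ℝ) ≤ 1) (β+1), one_rpow, one_mul]
      _ ≤ (t ^ (1 / α)) ^ (β+1) := rpow_le_rpow (by norm_num) h12 (by linarith)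
      _ = t ^ (1 / α * (β + 1)) := (rpow_mul ht.le _ _).symm
    have hB : (2:ℝ) ^ (-γ-1) ≤ r ^ (-γ-1) :=
      rpow_le_rpow_of_nonpos hr0 hr2 (by linarith)
    have ht1 : t ^ (β / α) = t ^ (1 / α * (β + 1)) * t ^ (-1 / α) := by
      rw [← rpow_add ht]
      congr 1
      field_simp
      ring
    have hcomb : (2:ℝ) ^ (-(β+1)) * t ^ (-1 / α) * (2:ℝ) ^ (-γ-1)
        ≤ t ^ (β / α) * r ^ (-γ-1) := by
      rw [ht1]
      exact mul_le_mul (mul_le_mul_of_nonneg_right hA htp.le) hB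
        (rpow_nonneg (by norm_num) _) (by positivity)
    calc t ^ (-1 / α)
        = 2 ^ (β + γ + 2) * ((2:ℝ) ^ (-(β+1)) * t ^ (-1 / α) * (2:ℝ) ^ (-γ-1)) := by
          rw [show (2:ℝ) ^ (β+γ+2) * ((2:ℝ) ^ (-(β+1)) * t ^ (-1/α) * (2:ℝ) ^ (-γ-1))
              = ((2:ℝ) ^ (β+γ+2) * (2:ℝ) ^ (-(β+1)) * (2:ℝ) ^ (-γ-1)) * t ^ (-1/α) by ring,
            ← rpow_add two_pos, ← rpow_add two_pos,
            show β + γ + 2 + -(β+1) + (-γ-1) = 0 by ring, rpow_zero, one_mul]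
    _ ≤ 2 ^ (β + γ + 2) * (t ^ (β / α) * r ^ (-γ-1)) :=
        mul_le_mul_of_nonneg_left hcomb (by positivity)

/-- Claim B : if `2 min(t^{1/α},1) < r`, `u ≤ t` and `r/2 ≤ ρ` then
`Gr u ρ ≤ 2^{β+γ+2} Gr t r`. -/
lemma claimB (hα : 0 < α) (hβ : 0 < β) (hγ : 0 < γ) (hu : 0 < u) (hut : u ≤ t)
    (hrm : 2 * min (t ^ (1 / α)) 1 < r) (hρ : r / 2 ≤ ρ) :
    Gr α β γ u ρ ≤ 2 ^ (β + γ + 2) * Gr α β γ t r := by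
  have ht : 0 < t := hu.trans_le hut
  have hmt : 0 < min (t ^ (1 / α)) 1 := min_pos hα ht
  have hr0 : 0 < r := by linarith
  have hρ0 : 0 < ρ := by linarith
  have hc1 : (1:ℝ) ≤ 2 ^ (β + γ + 2) := one_le_two_rpow (by linarith)
  have hmu : min (u ^ (1 / α)) 1 ≤ min (t ^ (1 / α)) 1 :=
    min_le_min (rpow_le_rpow hu.le hut (by positivity)) le_rfl
  have hρm : ¬(ρ ≤ min (u ^ (1 / α)) 1) := by push_neg; linarith
  have hrm' : ¬(r ≤ min (t ^ (1 / α)) 1) := by push_neg; linarith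
  have hub : u ^ (β / α) ≤ t ^ (β / α) := rpow_le_rpow hu.le hut (by positivity)
  have main : ∀ eρ er : ℝ, ρ ^ eρ ≤ 2 ^ (β + γ + 2) * r ^ er →
      u ^ (β / α) * ρ ^ eρ ≤ 2 ^ (β + γ + 2) * (t ^ (β / α) * r ^ er) := by
    intro eρ er h
    calc u ^ (β / α) * ρ ^ eρ ≤ t ^ (β / α) * (2 ^ (β + γ + 2) * r ^ er) :=
          mul_le_mul hub h (rpow_nonneg hρ0.le _) (rpow_nonneg ht.le _)
    _ = 2 ^ (β + γ + 2) * (t ^ (β / α) * r ^ er) := by ring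
  unfold Gr
  rw [if_neg hρm, if_neg hrm']
  split_ifs with h2 h4 h5
  · refine main _ _ ?_
    calc ρ ^ (-β-1) ≤ (r/2) ^ (-β-1) :=
          rpow_le_rpow_of_nonpos (by linarith) hρ (by linarith)
    _ = r ^ (-β-1) * 2 ^ (β+1) := by
        rw [half_rpow hr0.le, show -(-β-1) = β+1 from by ring]
    _ ≤ r ^ (-β-1) * 2 ^ (β+γ+2) :=
        mul_le_mul_of_nonneg_left (two_rpow_le _ _ (by linarith)) (rpow_nonneg hr0.le _)
    _ = 2 ^ (β+γ+2) * r ^ (-β-1) := mul_comm _ _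
  · refine main _ _ ?_
    have h1r : (1:ℝ) < r := not_le.mp h4
    have hρh : (1/2:ℝ) ≤ ρ := by linarith
    have hr2 : r ≤ 2 := by linarith
    calc ρ ^ (-β-1) ≤ (1/2:ℝ) ^ (-β-1) :=
          rpow_le_rpow_of_nonpos one_half_pos hρh (by linarith)
    _ = 2 ^ (β+1) := by
        rw [half_rpow (by norm_num : (0:ℝ) ≤ 1), one_rpow, one_mul,
          show -(-β-1) = β+1 from by ring]
    _ = 2 ^ (β+γ+2) * 2 ^ (-γ-1) := by
        rw [← rpow_add two_pos]
        congr 1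
        ring
    _ ≤ 2 ^ (β+γ+2) * r ^ (-γ-1) := by
        refine mul_le_mul_of_nonneg_left ?_ (rpow_nonneg (by norm_num) _)
        exact rpow_le_rpow_of_nonpos hr0 hr2 (by linarith)
  · refine main _ _ ?_
    have h1ρ : (1:ℝ) < ρ := not_le.mp h2
    calc ρ ^ (-γ-1) ≤ 1 :=
          rpow_le_one_of_one_le_of_nonpos h1ρ.le (by linarith)
    _ ≤ r ^ (-β-1) :=
        one_le_rpow_of_pos_of_le_one_of_nonpos hr0 h5 (by linarith)
    _ ≤ 2 ^ (β+γ+2) * r ^ (-β-1) := le_mul_of_one_le_left (rpow_nonneg hr0.le _) hc1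
  · refine main _ _ ?_
    calc ρ ^ (-γ-1) ≤ (r/2) ^ (-γ-1) :=
          rpow_le_rpow_of_nonpos (by linarith) hρ (by linarith)
    _ = r ^ (-γ-1) * 2 ^ (γ+1) := by
        rw [half_rpow hr0.le, show -(-γ-1) = γ+1 from by ring]
    _ ≤ r ^ (-γ-1) * 2 ^ (β+γ+2) :=
        mul_le_mul_of_nonneg_left (two_rpow_le _ _ (by linarith)) (rpow_nonneg hr0.le _)
    _ = 2 ^ (β+γ+2) * r ^ (-γ-1) := mul_comm _ _

/-- Integrability of the radial profile on `(0,∞)`. -/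
lemma Gr_integrableOn_Ioi (hα : 0 < α) (hβ : 0 < β) (hγ : 0 < γ) (hu : 0 < u) :
    IntegrableOn (Gr α β γ u) (Ioi 0) := by
  have hm : 0 < min (u ^ (1 / α)) 1 := min_pos hα hu
  have hm1 : min (u ^ (1 / α)) 1 ≤ 1 := min_le_right _ _
  have hsplit : Ioi (0:ℝ) = Ioc 0 (min (u ^ (1 / α)) 1) ∪
      (Ioc (min (u ^ (1 / α)) 1) 1 ∪ Ioi 1) := by
    rw [Ioc_union_Ioi_eq_Ioi hm1, Ioc_union_Ioi_eq_Ioi hm.le]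
  rw [hsplit]
  refine IntegrableOn.union ?_ (IntegrableOn.union ?_ ?_)
  · refine (integrableOn_const (C := u ^ (-1 / α))
      measure_Ioc_lt_top.ne).congr_fun (fun ρ hρ => ?_) measurableSet_Ioc
    unfold Gr
    rw [if_pos hρ.2]
  · refine IntegrableOn.congr_fun (f := fun ρ => u ^ (β / α) * ρ ^ (-β - 1)) ?_
      (fun ρ hρ => ?_) measurableSet_Ioc
    · exact ((integrableOn_Ioi_rpow_of_lt (by linarith : -β - 1 < -1) hm).mono_set
        Ioc_subset_Ioi_self).const_mul (u ^ (β / α))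
    · unfold Gr
      rw [if_neg (not_le.mpr hρ.1), if_pos hρ.2]
  · refine IntegrableOn.congr_fun (f := fun ρ => u ^ (β / α) * ρ ^ (-γ - 1)) ?_
      (fun ρ hρ => ?_) measurableSet_Ioi
    · exact ((integrableOn_Ioi_rpow_of_lt (by linarith : -γ - 1 < -1) one_pos)).const_mul
        (u ^ (β / α))
    · have h1 : (1:ℝ) < ρ := hρ
      unfold Gr
      rw [if_neg (not_le.mpr (lt_of_le_of_lt hm1 h1)), if_neg (not_le.mpr h1)]

/-- Integral bound for the radial profile on `(0,∞)`. -/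
lemma Gr_setIntegral_le (hα : 0 < α) (hβ : 0 < β) (hγ : 0 < γ) (hu : 0 < u)
    (huT : u ≤ T) :
    ∫ ρ in Ioi (0:ℝ), Gr α β γ u ρ ≤
      1 + max 1 (T ^ (β / α)) / β + max 1 (T ^ (β / α)) / γ := by
  have hm : 0 < min (u ^ (1 / α)) 1 := min_pos hα hu
  have hm1 : min (u ^ (1 / α)) 1 ≤ 1 := min_le_right _ _
  have hsplit : Ioi (0:ℝ) = Ioc 0 (min (u ^ (1 / α)) 1) ∪
      (Ioc (min (u ^ (1 / α)) 1) 1 ∪ Ioi 1) := by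
    rw [Ioc_union_Ioi_eq_Ioi hm1, Ioc_union_Ioi_eq_Ioi hm.le]
  have hint1 : IntegrableOn (Gr α β γ u) (Ioc 0 (min (u ^ (1 / α)) 1)) :=
    (Gr_integrableOn_Ioi hα hβ hγ hu).mono_set (by rw [hsplit]; exact subset_union_left)
  have hint2 : IntegrableOn (Gr α β γ u) (Ioc (min (u ^ (1 / α)) 1) 1) :=
    (Gr_integrableOn_Ioi hα hβ hγ hu).mono_set
      (by rw [hsplit]; exact subset_union_of_subset_right subset_union_left _)
  have hint3 : IntegrableOn (Gr α β γ u) (Ioi 1) :=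
    (Gr_integrableOn_Ioi hα hβ hγ hu).mono_set
      (by rw [hsplit]; exact subset_union_of_subset_right subset_union_right _)
  have hdisj1 : Disjoint (Ioc (0:ℝ) (min (u ^ (1 / α)) 1))
      (Ioc (min (u ^ (1 / α)) 1) 1 ∪ Ioi 1) := by
    rw [Set.disjoint_left]
    rintro ρ ⟨_, h⟩ (⟨h', _⟩ | h')
    · exact absurd h (not_le.mpr h')
    · exact absurd h (not_le.mpr (lt_of_le_of_lt hm1 h'))
  have hdisj2 : Disjoint (Ioc (min (u ^ (1 / α)) 1) 1) (Ioi (1:ℝ)) := by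
    rw [Set.disjoint_left]
    rintro ρ ⟨_, h⟩ h'
    exact absurd h (not_le.mpr h')
  rw [hsplit, setIntegral_union hdisj1 ((measurableSet_Ioc).union measurableSet_Ioi)
      hint1 (hint2.union hint3),
    setIntegral_union hdisj2 measurableSet_Ioi hint2 hint3]
  have hpart1 : ∫ ρ in Ioc (0:ℝ) (min (u ^ (1 / α)) 1), Gr α β γ u ρ ≤ 1 := by
    rw [setIntegral_congr_fun measurableSet_Ioc
      (fun ρ hρ => by unfold Gr; rw [if_pos hρ.2] : EqOn (Gr α β γ u)
        (fun _ => u ^ (-1 / α)) (Ioc 0 (min (u ^ (1 / α)) 1))),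
      setIntegral_const, Real.volume_real_Ioc_of_le hm.le, smul_eq_mul]
    calc (min (u ^ (1 / α)) 1 - 0) * u ^ (-1 / α)
        ≤ u ^ (1 / α) * u ^ (-1 / α) := by
          refine mul_le_mul_of_nonneg_right ?_ (rpow_nonneg hu.le _)
          simpa using min_le_left (u ^ (1 / α)) 1
    _ = 1 := by rw [← rpow_add hu, show 1 / α + -1 / α = 0 by ring, rpow_zero]
  have hpart2 : ∫ ρ in Ioc (min (u ^ (1 / α)) 1) 1, Gr α β γ u ρ ≤
      max 1 (T ^ (β / α)) / β := by
    rw [setIntegral_congr_fun measurableSet_Ioc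
      (fun ρ hρ => by unfold Gr; rw [if_neg (not_le.mpr hρ.1), if_pos hρ.2] :
        EqOn (Gr α β γ u) (fun ρ => u ^ (β / α) * ρ ^ (-β - 1))
          (Ioc (min (u ^ (1 / α)) 1) 1)),
      integral_const_mul]
    have h2v : ∫ ρ in Ioc (min (u ^ (1 / α)) 1) 1, ρ ^ (-β - 1) ≤
        (min (u ^ (1 / α)) 1) ^ (-β) / β := by
      rw [← intervalIntegral.integral_of_le hm1,
        integral_rpow (Or.inr ⟨by linarith, notMem_uIcc_of_lt hm one_pos⟩),
        show -β - 1 + 1 = -β by ring, one_rpow]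
      have hmb : (0:ℝ) < (min (u ^ (1 / α)) 1) ^ (-β) := rpow_pos_of_pos hm _
      rw [show (1 - (min (u ^ (1 / α)) 1) ^ (-β)) / (-β)
          = ((min (u ^ (1 / α)) 1) ^ (-β) - 1) / β by
            rw [div_neg, ← neg_div, neg_sub]]
      gcongr
      linarith
    calc u ^ (β / α) * ∫ ρ in Ioc (min (u ^ (1 / α)) 1) 1, ρ ^ (-β - 1)
        ≤ u ^ (β / α) * ((min (u ^ (1 / α)) 1) ^ (-β) / β) := by
          refine mul_le_mul_of_nonneg_left h2v (rpow_nonneg hu.le _)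
    _ = u ^ (β / α) * (min (u ^ (1 / α)) 1) ^ (-β) / β := by ring
    _ ≤ max 1 (T ^ (β / α)) / β := by
          gcongr
          exact key2 hα hβ hu huT
  have hpart3 : ∫ ρ in Ioi (1:ℝ), Gr α β γ u ρ ≤ max 1 (T ^ (β / α)) / γ := by
    rw [setIntegral_congr_fun measurableSet_Ioi
      (fun ρ hρ => by
        have h1 : (1:ℝ) < ρ := hρ
        unfold Gr
        rw [if_neg (not_le.mpr (lt_of_le_of_lt hm1 h1)), if_neg (not_le.mpr h1)] :
        EqOn (Gr α β γ u) (fun ρ => u ^ (β / α) * ρ ^ (-γ - 1)) (Ioi 1)),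
      integral_const_mul, integral_Ioi_rpow_of_lt (by linarith : -γ - 1 < -1) one_pos,
      show (-(1:ℝ) ^ (-γ - 1 + 1)) / (-γ - 1 + 1) = 1 / γ by
        rw [show -γ - 1 + 1 = -γ by ring, one_rpow]; field_simp]
    calc u ^ (β / α) * (1 / γ) ≤ max 1 (T ^ (β / α)) * (1 / γ) :=
        mul_le_mul_of_nonneg_right (key3 hα hβ hu huT) (by positivity)
    _ = max 1 (T ^ (β / α)) / γ := by ring
  linarith

/-- Integrability of `z ↦ Gr u |z - a|` on `ℝ`. -/
lemma Gr_abs_integrable (hα : 0 < α) (hβ : 0 < β) (hγ : 0 < γ) (hu : 0 < u) (a : ℝ) :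
    Integrable (fun z => Gr α β γ u |z - a|) := by
  have hIoi : IntegrableOn (fun w => Gr α β γ u |w|) (Ioi 0) :=
    (Gr_integrableOn_Ioi hα hβ hγ hu).congr_fun
      (fun w hw => by rw [abs_of_pos hw]) measurableSet_Ioi
  have h0 : Integrable (fun w => Gr α β γ u |w|) := by
    have hIic : IntegrableOn (fun w => Gr α β γ u |w|) (Iic 0) := by
      rw [← Measure.map_neg_eq_self (volume : Measure ℝ)]
      have hemb : MeasurableEmbedding fun x : ℝ => -x :=
        (Homeomorph.neg ℝ).measurableEmbedding
      rw [hemb.integrableOn_map_iff]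
      simp_rw [Function.comp_def, abs_neg, neg_preimage, neg_Iic, neg_zero]
      exact Iff.mpr integrableOn_Ici_iff_integrableOn_Ioi hIoi
    rw [← integrableOn_univ, ← Iic_union_Ioi (a := (0:ℝ)), integrableOn_union]
    exact ⟨hIic, hIoi⟩
  exact h0.comp_sub_right a

/-- Integral bound for `z ↦ Gr u |z - a|` on `ℝ`. -/
lemma Gr_abs_integral_le (hα : 0 < α) (hβ : 0 < β) (hγ : 0 < γ) (hu : 0 < u)
    (huT : u ≤ T) (a : ℝ) :
    ∫ z, Gr α β γ u |z - a| ≤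
      2 * (1 + max 1 (T ^ (β / α)) / β + max 1 (T ^ (β / α)) / γ) := by
  have h1 : ∫ z, Gr α β γ u |z - a| = ∫ w, Gr α β γ u |w| :=
    integral_sub_right_eq_self (fun w => Gr α β γ u |w|) a
  rw [h1, integral_comp_abs (f := fun ρ => Gr α β γ u ρ)]
  have h2 := Gr_setIntegral_le hα hβ hγ hu huT
  linarith

end aux

theorem stmt17 (α β γ T : ℝ) (hα : 0 < α) (hβ : 0 < β) (hγ : 0 < γ) (hT : 0 < T) :
    ∃ C > 0, ∀ t ∈ Set.Ioc (0:ℝ) T, ∀ s ∈ Set.Ioo (0:ℝ) t, ∀ x y : ℝ,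
      (∫ z : ℝ, G3 α β γ (t - s) x z * G3 α β γ s z y) ≤ C * G3 α β γ t x y := by
  have hM1 : (1:ℝ) ≤ max 1 (T ^ (β / α)) := le_max_left _ _
  have hB1 : (1:ℝ) ≤ max 1 (T ^ ((β + 1) / α)) := le_max_left _ _
  have hcpos : (0:ℝ) < 2 ^ (β + γ + 2) := rpow_pos_of_pos two_pos _
  have h2a : (0:ℝ) < 2 ^ (1 / α) := rpow_pos_of_pos two_pos _
  have h2a1 : (1:ℝ) ≤ 2 ^ (1 / α) := one_le_two_rpow (by positivity)
  have hBc1 : (1:ℝ) ≤ max 1 (T ^ ((β + 1) / α)) * 2 ^ (1 / α) := by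
    calc (1:ℝ) = 1 * 1 := (one_mul 1).symm
    _ ≤ max 1 (T ^ ((β + 1) / α)) * 2 ^ (1 / α) :=
        mul_le_mul hB1 h2a1 zero_le_one (le_trans zero_le_one hB1)
  refine ⟨2 * (2 * (1 + max 1 (T ^ (β / α)) / β + max 1 (T ^ (β / α)) / γ)) *
    (max 1 (T ^ ((β + 1) / α)) * 2 ^ (1 / α) * 2 ^ (β + γ + 2)), by positivity, ?_⟩
  rintro t ⟨ht0, htT⟩ s ⟨hs0, hst⟩ x y
  have hts : 0 < t - s := sub_pos.mpr hst
  have htsT : t - s ≤ T := by linarith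
  have hsT : s ≤ T := by linarith
  have hstt : s ≤ t := hst.le
  have htt : t - s ≤ t := by linarith
  have hexp : -1 / α ≤ 0 := by
    rw [neg_div]
    exact neg_nonpos.mpr (by positivity)
  have hfpos : ∀ z : ℝ, 0 < G3 α β γ (t - s) x z := fun z => by
    rw [G3_eq_Gr]; exact Gr_pos hα hts
  have hgpos : ∀ z : ℝ, 0 < G3 α β γ s z y := fun z => by
    rw [G3_eq_Gr]; exact Gr_pos hα hs0
  have hGpos : 0 < G3 α β γ t x y := by
    rw [G3_eq_Gr]; exact Gr_pos hα ht0
  have hg_comm : (fun z => Gr α β γ s |y - z|) = fun z => Gr α β γ s |z - y| := by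
    funext z; rw [abs_sub_comm]
  have hfint : Integrable (fun z => G3 α β γ (t - s) x z) := by
    simp only [G3_eq_Gr]
    exact Gr_abs_integrable hα hβ hγ hts x
  have hgint : Integrable (fun z => G3 α β γ s z y) := by
    simp only [G3_eq_Gr]
    rw [hg_comm]
    exact Gr_abs_integrable hα hβ hγ hs0 y
  have hfI : ∫ z, G3 α β γ (t - s) x z ≤
      2 * (1 + max 1 (T ^ (β / α)) / β + max 1 (T ^ (β / α)) / γ) := by
    simp only [G3_eq_Gr]
    exact Gr_abs_integral_le hα hβ hγ hts htsT x
  have hgI : ∫ z, G3 α β γ s z y ≤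
      2 * (1 + max 1 (T ^ (β / α)) / β + max 1 (T ^ (β / α)) / γ) := by
    simp only [G3_eq_Gr]
    rw [hg_comm]
    exact Gr_abs_integral_le hα hβ hγ hs0 hsT y
  -- the pointwise sub-convolution bound
  have hpt : ∀ z : ℝ, G3 α β γ (t - s) x z * G3 α β γ s z y ≤
      max 1 (T ^ ((β + 1) / α)) * 2 ^ (1 / α) * 2 ^ (β + γ + 2) * G3 α β γ t x y *
        (G3 α β γ (t - s) x z + G3 α β γ s z y) := by
    intro z
    have hDpos : (0:ℝ) ≤
        max 1 (T ^ ((β + 1) / α)) * 2 ^ (1 / α) * 2 ^ (β + γ + 2) * G3 α β γ t x y :=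
      mul_nonneg (by positivity) hGpos.le
    have key : G3 α β γ (t - s) x z ≤
          max 1 (T ^ ((β + 1) / α)) * 2 ^ (1 / α) * 2 ^ (β + γ + 2) * G3 α β γ t x y ∨
        G3 α β γ s z y ≤
          max 1 (T ^ ((β + 1) / α)) * 2 ^ (1 / α) * 2 ^ (β + γ + 2) * G3 α β γ t x y := by
      rcases le_or_gt |y - x| (2 * min (t ^ (1 / α)) 1) with hcase | hcase
      · -- r small compared to min(t^{1/α},1)
        have hGA : t ^ (-1 / α) ≤ 2 ^ (β + γ + 2) * G3 α β γ t x y := by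
          rw [G3_eq_Gr]; exact claimA hα hβ hγ ht0 hcase
        rcases le_total s (t - s) with hle | hle
        · left
          have h1 : G3 α β γ (t - s) x z ≤
              max 1 (T ^ ((β + 1) / α)) * (t - s) ^ (-1 / α) := by
            rw [G3_eq_Gr]; exact key1 hα hβ hγ hts htsT
          have h2 : (t - s) ^ (-1 / α) ≤ 2 ^ (1 / α) * t ^ (-1 / α) := by
            have ht2 : (0:ℝ) < t / 2 := by linarith
            calc (t - s) ^ (-1 / α) ≤ (t / 2) ^ (-1 / α) :=
                  rpow_le_rpow_of_nonpos ht2 (by linarith) hexp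
            _ = t ^ (-1 / α) * 2 ^ (1 / α) := by
                rw [half_rpow ht0.le, show -(-1 / α) = 1 / α by ring]
            _ = 2 ^ (1 / α) * t ^ (-1 / α) := mul_comm _ _
          calc G3 α β γ (t - s) x z
              ≤ max 1 (T ^ ((β + 1) / α)) * (t - s) ^ (-1 / α) := h1
          _ ≤ max 1 (T ^ ((β + 1) / α)) * (2 ^ (1 / α) * t ^ (-1 / α)) :=
              mul_le_mul_of_nonneg_left h2 (by positivity)
          _ ≤ max 1 (T ^ ((β + 1) / α)) *
                (2 ^ (1 / α) * (2 ^ (β + γ + 2) * G3 α β γ t x y)) :=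
              mul_le_mul_of_nonneg_left
                (mul_le_mul_of_nonneg_left hGA h2a.le) (by positivity)
          _ = max 1 (T ^ ((β + 1) / α)) * 2 ^ (1 / α) * 2 ^ (β + γ + 2) *
                G3 α β γ t x y := by ring
        · right
          have h1 : G3 α β γ s z y ≤ max 1 (T ^ ((β + 1) / α)) * s ^ (-1 / α) := by
            rw [G3_eq_Gr]; exact key1 hα hβ hγ hs0 hsT
          have h2 : s ^ (-1 / α) ≤ 2 ^ (1 / α) * t ^ (-1 / α) := by
            have ht2 : (0:ℝ) < t / 2 := by linarith
            calc s ^ (-1 / α) ≤ (t / 2) ^ (-1 / α) :=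
                  rpow_le_rpow_of_nonpos ht2 (by linarith) hexp
            _ = t ^ (-1 / α) * 2 ^ (1 / α) := by
                rw [half_rpow ht0.le, show -(-1 / α) = 1 / α by ring]
            _ = 2 ^ (1 / α) * t ^ (-1 / α) := mul_comm _ _
          calc G3 α β γ s z y
              ≤ max 1 (T ^ ((β + 1) / α)) * s ^ (-1 / α) := h1
          _ ≤ max 1 (T ^ ((β + 1) / α)) * (2 ^ (1 / α) * t ^ (-1 / α)) :=
              mul_le_mul_of_nonneg_left h2 (by positivity)
          _ ≤ max 1 (T ^ ((β + 1) / α)) *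
                (2 ^ (1 / α) * (2 ^ (β + γ + 2) * G3 α β γ t x y)) :=
              mul_le_mul_of_nonneg_left
                (mul_le_mul_of_nonneg_left hGA h2a.le) (by positivity)
          _ = max 1 (T ^ ((β + 1) / α)) * 2 ^ (1 / α) * 2 ^ (β + γ + 2) *
                G3 α β γ t x y := by ring
      · -- r large : use the decay of the kernel
        have htri : |y - x| / 2 ≤ |z - x| ∨ |y - x| / 2 ≤ |z - y| := by
          by_contra hcon
          push_neg at hcon
          have habs : |y - x| ≤ |y - z| + |z - x| := abs_sub_le y z x
          rw [abs_sub_comm y z] at habs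
          linarith [hcon.1, hcon.2]
        rcases htri with h | h
        · left
          have hcb := claimB hα hβ hγ hts htt hcase h
          rw [← G3_eq_Gr, ← G3_eq_Gr] at hcb
          calc G3 α β γ (t - s) x z ≤ 2 ^ (β + γ + 2) * G3 α β γ t x y := hcb
          _ ≤ max 1 (T ^ ((β + 1) / α)) * 2 ^ (1 / α) * 2 ^ (β + γ + 2) *
                G3 α β γ t x y := by
              refine mul_le_mul_of_nonneg_right ?_ hGpos.le
              exact le_mul_of_one_le_left hcpos.le hBc1
        · right
          have hcb := claimB hα hβ hγ hs0 hstt hcase h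
          rw [abs_sub_comm z y] at hcb
          rw [← G3_eq_Gr, ← G3_eq_Gr] at hcb
          calc G3 α β γ s z y ≤ 2 ^ (β + γ + 2) * G3 α β γ t x y := hcb
          _ ≤ max 1 (T ^ ((β + 1) / α)) * 2 ^ (1 / α) * 2 ^ (β + γ + 2) *
                G3 α β γ t x y := by
              refine mul_le_mul_of_nonneg_right ?_ hGpos.le
              exact le_mul_of_one_le_left hcpos.le hBc1
    rcases key with hkey | hkey
    · calc G3 α β γ (t - s) x z * G3 α β γ s z y
          ≤ (max 1 (T ^ ((β + 1) / α)) * 2 ^ (1 / α) * 2 ^ (β + γ + 2) *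
              G3 α β γ t x y) * G3 α β γ s z y :=
          mul_le_mul_of_nonneg_right hkey (hgpos z).le
      _ ≤ max 1 (T ^ ((β + 1) / α)) * 2 ^ (1 / α) * 2 ^ (β + γ + 2) *
            G3 α β γ t x y * (G3 α β γ (t - s) x z + G3 α β γ s z y) :=
          mul_le_mul_of_nonneg_left (le_add_of_nonneg_left (hfpos z).le) hDpos
    · calc G3 α β γ (t - s) x z * G3 α β γ s z y
          ≤ G3 α β γ (t - s) x z * (max 1 (T ^ ((β + 1) / α)) * 2 ^ (1 / α) *
              2 ^ (β + γ + 2) * G3 α β γ t x y) :=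
          mul_le_mul_of_nonneg_left hkey (hfpos z).le
      _ = (max 1 (T ^ ((β + 1) / α)) * 2 ^ (1 / α) * 2 ^ (β + γ + 2) *
            G3 α β γ t x y) * G3 α β γ (t - s) x z := mul_comm _ _
      _ ≤ max 1 (T ^ ((β + 1) / α)) * 2 ^ (1 / α) * 2 ^ (β + γ + 2) *
            G3 α β γ t x y * (G3 α β γ (t - s) x z + G3 α β γ s z y) :=
          mul_le_mul_of_nonneg_left (le_add_of_nonneg_right (hgpos z).le) hDpos
  have hDnn : (0:ℝ) ≤
      max 1 (T ^ ((β + 1) / α)) * 2 ^ (1 / α) * 2 ^ (β + γ + 2) * G3 α β γ t x y :=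
    mul_nonneg (by positivity) hGpos.le
  calc ∫ z : ℝ, G3 α β γ (t - s) x z * G3 α β γ s z y
      ≤ ∫ z : ℝ, max 1 (T ^ ((β + 1) / α)) * 2 ^ (1 / α) * 2 ^ (β + γ + 2) *
          G3 α β γ t x y * (G3 α β γ (t - s) x z + G3 α β γ s z y) :=
      integral_mono_of_nonneg
        (Filter.Eventually.of_forall fun z => mul_nonneg (hfpos z).le (hgpos z).le)
        ((hfint.add hgint).const_mul _)
        (Filter.Eventually.of_forall hpt)
  _ = max 1 (T ^ ((β + 1) / α)) * 2 ^ (1 / α) * 2 ^ (β + γ + 2) * G3 α β γ t x y *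
        ((∫ z, G3 α β γ (t - s) x z) + ∫ z, G3 α β γ s z y) := by
      rw [integral_const_mul, integral_add hfint hgint]
  _ ≤ max 1 (T ^ ((β + 1) / α)) * 2 ^ (1 / α) * 2 ^ (β + γ + 2) * G3 α β γ t x y *
        (2 * (1 + max 1 (T ^ (β / α)) / β + max 1 (T ^ (β / α)) / γ) +
         2 * (1 + max 1 (T ^ (β / α)) / β + max 1 (T ^ (β / α)) / γ)) :=
      mul_le_mul_of_nonneg_left (add_le_add hfI hgI) hDnn
  _ = 2 * (2 * (1 + max 1 (T ^ (β / α)) / β + max 1 (T ^ (β / α)) / γ)) *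
        (max 1 (T ^ ((β + 1) / α)) * 2 ^ (1 / α) * 2 ^ (β + γ + 2)) *
        G3 α β γ t x y := by ring
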